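/- Let p ∈ [1,2]. Then for all real x and a, |x+a|^p + |x−a|^p − 2|x|^p ≤ 2|a|^p. -/
import Mathlib


open Real

private lemma nn_concave (s : ℝ) (hs0 : 0 < s) (hs1 : s ≤ 1) (u v : NNReal) :
    u ^ s + v ^ s ≤ 2 ^ (1 - s) * (u + v) ^ s := by
  have hq : (1 : ℝ) ≤ 1 / s := by
    rw [le_div_iff₀ hs0, one_mul]; exact hs1
  have h := NNReal.rpow_add_le_mul_rpow_add_rpow (u ^ s) (v ^ s) hq
  have hinv : s * (1 / s) = 1 := by field_simp
  rw [← NNReal.rpow_mul u, ← NNReal.rpow_mul v, hinv, NNReal.rpow_one, NNReal.rpow_one] at h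
  calc u ^ s + v ^ s = ((u ^ s + v ^ s) ^ (1 / s)) ^ s := by
        rw [← NNReal.rpow_mul, one_div, inv_mul_cancel₀ hs0.ne', NNReal.rpow_one]
    _ ≤ ((2 : NNReal) ^ (1 / s - 1) * (u + v)) ^ s := NNReal.rpow_le_rpow h hs0.le
    _ = 2 ^ (1 - s) * (u + v) ^ s := by
        rw [NNReal.mul_rpow, ← NNReal.rpow_mul]
        congr 2
        field_simp

private lemma real_concave (s : ℝ) (hs0 : 0 < s) (hs1 : s ≤ 1) (u v : ℝ)
    (hu : 0 ≤ u) (hv : 0 ≤ v) :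
    u ^ s + v ^ s ≤ 2 ^ (1 - s) * (u + v) ^ s := by
  lift u to NNReal using hu
  lift v to NNReal using hv
  have h := nn_concave s hs0 hs1 u v
  have h2 := NNReal.coe_le_coe.2 h
  push_cast [NNReal.coe_rpow] at h2
  convert h2 using 3 <;> norm_num

private lemma real_subadd (s : ℝ) (hs0 : 0 ≤ s) (hs1 : s ≤ 1) (u v : ℝ)
    (hu : 0 ≤ u) (hv : 0 ≤ v) :
    (u + v) ^ s ≤ u ^ s + v ^ s := by
  lift u to NNReal using hu
  lift v to NNReal using hv
  have h := NNReal.rpow_add_le_add_rpow u v hs0 hs1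
  have h2 := NNReal.coe_le_coe.2 h
  push_cast [NNReal.coe_rpow] at h2
  exact h2

/-- For `p ∈ [1,2]` and all real `x, a`: `|x+a|^p + |x−a|^p − 2|x|^p ≤ 2|a|^p`. -/
theorem abs_rpow_add_sub_le (p : ℝ) (hp1 : 1 ≤ p) (hp2 : p ≤ 2) (x a : ℝ) :
    |x + a| ^ p + |x - a| ^ p - 2 * |x| ^ p ≤ 2 * |a| ^ p := by
  set s := p / 2 with hs
  have hs0 : 0 < s := by positivity
  have hs1 : s ≤ 1 := by rw [hs]; linarith
  have habs : ∀ y : ℝ, |y| ^ p = (y ^ 2) ^ s := by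
    intro y
    rw [← sq_abs, ← Real.rpow_natCast |y| 2, ← Real.rpow_mul (abs_nonneg y)]
    congr 1
    push_cast
    ring
  have h1 := real_concave s hs0 hs1 ((x + a) ^ 2) ((x - a) ^ 2) (sq_nonneg _) (sq_nonneg _)
  have he : (x + a) ^ 2 + (x - a) ^ 2 = 2 * (x ^ 2 + a ^ 2) := by ring
  rw [he] at h1
  have h1' : ((x + a) ^ 2) ^ s + ((x - a) ^ 2) ^ s ≤ 2 * (x ^ 2 + a ^ 2) ^ s := by
    have hx2 : (0 : ℝ) ≤ x ^ 2 + a ^ 2 := by positivity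
    rw [Real.mul_rpow (by norm_num) hx2, ← mul_assoc, ← Real.rpow_add two_pos] at h1
    have : (1 : ℝ) - s + s = 1 := by ring
    rw [this, Real.rpow_one] at h1
    exact h1
  have h2 := real_subadd s hs0.le hs1 (x ^ 2) (a ^ 2) (sq_nonneg _) (sq_nonneg _)
  rw [habs (x + a), habs (x - a), habs x, habs a]
  nlinarith [h1', h2]
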